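/- Let M be an odd positive integer, χ a Dirichlet character modulo M, ε a complex number with |ε| = 1, and ♢ an integer with 1 ≤ ♢ < M. Let L : ℤ → ℂ be any function such that for every positive integer D with D ≡ ♢ (mod M) one has L(D) = χ(D) · J(D | M) · ε · conj(L(D)), where J(· | M) denotes the Jacobi symbol. Then there exists a nonzero complex number u such that for every positive integer D with D ≡ ♢ (mod M) there is a real number t with L(D) = t · u; that is, all the values L(D) lie on a single line through the origin in the complex plane. -/

import Mathlib

/-- All values `L D`, for positive integers `D ≡ ♢ (mod M)` of a function `L`
satisfying the abstract functional equation
`L D = χ D * J(D | M) * ε * conj (L D)`, lie on a single line through the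
origin in the complex plane. -/
theorem central_values_on_line_through_origin
    (M : ℕ) (hModd : Odd M) (hMpos : 0 < M) (χ : DirichletCharacter ℂ M)
    (ε : ℂ) (hε : ‖ε‖ = 1) (d : ℤ) (hd1 : 1 ≤ d) (hdM : d < (M : ℤ))
    (L : ℤ → ℂ)
    (hL : ∀ D : ℤ, 0 < D → D ≡ d [ZMOD (M : ℤ)] →
      L D = χ (D : ZMod M) * (jacobiSym D M : ℂ) * ε * (starRingEnd ℂ) (L D)) :
    ∃ u : ℂ, u ≠ 0 ∧
      ∀ D : ℤ, 0 < D → D ≡ d [ZMOD (M : ℤ)] → ∃ t : ℝ, L D = (t : ℂ) * u := by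
  set c : ℂ := χ (d : ZMod M) * (jacobiSym d M : ℂ) * ε with hc
  have key : ∀ D : ℤ, 0 < D → D ≡ d [ZMOD (M : ℤ)] →
      L D = c * (starRingEnd ℂ) (L D) := by
    intro D hD hDd
    have hcast : (D : ZMod M) = (d : ZMod M) :=
      (ZMod.intCast_eq_intCast_iff D d M).mpr hDd
    have hjac : jacobiSym D M = jacobiSym d M := jacobiSym.mod_left' hDd
    conv_lhs => rw [hL D hD hDd, hcast, hjac]
  by_cases h1 : ‖c‖ = 1
  · -- choose a square root u of c; then L D * conj u is real
    have hc0 : c ≠ 0 := by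
      intro h; rw [h] at h1; simp at h1
    set u : ℂ := Complex.exp (Complex.log c / 2) with hu
    have hu0 : u ≠ 0 := Complex.exp_ne_zero _
    have husq : u * u = c := by
      rw [hu, ← Complex.exp_add]
      rw [show Complex.log c / 2 + Complex.log c / 2 = Complex.log c by ring]
      exact Complex.exp_log hc0
    have huabs : ‖u‖ = 1 := by
      rw [hu, Complex.norm_exp]
      have : (Complex.log c / 2).re = Real.log ‖c‖ / 2 := by
        simp [Complex.log_re, Complex.div_re]
      rw [this, h1]
      simp
    refine ⟨u, hu0, fun D hD hDd => ?_⟩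
    have hLD := key D hD hDd
    -- t := (L D * conj u) is real
    have hmul : u * (starRingEnd ℂ) u = 1 := by
      rw [Complex.mul_conj]
      norm_cast
      simp [Complex.normSq_eq_norm_sq, huabs]
    have hreal : (starRingEnd ℂ) (L D * (starRingEnd ℂ) u) = L D * (starRingEnd ℂ) u := by
      have hconjL : (starRingEnd ℂ) (L D) = (starRingEnd ℂ) c * L D := by
        have := congrArg (starRingEnd ℂ) hLD
        simpa [mul_comm] using this
      have hcu : (starRingEnd ℂ) c = (starRingEnd ℂ) u * (starRingEnd ℂ) u := by
        rw [← map_mul, husq]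
      calc (starRingEnd ℂ) (L D * (starRingEnd ℂ) u)
          = (starRingEnd ℂ) (L D) * u := by simp
        _ = (starRingEnd ℂ) c * L D * u := by rw [hconjL]
        _ = ((starRingEnd ℂ) u * (starRingEnd ℂ) u) * L D * u := by rw [hcu]
        _ = L D * (starRingEnd ℂ) u * ((starRingEnd ℂ) u * u) := by ring
        _ = L D * (starRingEnd ℂ) u := by rw [mul_comm ((starRingEnd ℂ) u) u, hmul, mul_one]
    obtain ⟨t, ht⟩ := Complex.conj_eq_iff_real.mp hreal
    refine ⟨t, ?_⟩
    have : L D * (starRingEnd ℂ) u * u = (t : ℂ) * u := by rw [ht]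
    rw [mul_assoc, mul_comm ((starRingEnd ℂ) u) u, hmul, mul_one] at this
    exact this
  · -- then all values vanish
    refine ⟨1, one_ne_zero, fun D hD hDd => ?_⟩
    have hLD := key D hD hDd
    have habs : ‖L D‖ = ‖c‖ * ‖L D‖ := by
      calc ‖L D‖ = ‖c * (starRingEnd ℂ) (L D)‖ := by rw [← hLD]
        _ = ‖c‖ * ‖L D‖ := by
            rw [norm_mul, Complex.norm_conj]
    have hzero : L D = 0 := by
      by_contra hne
      have habs0 : ‖L D‖ ≠ 0 := by simpa using hne
      exact h1 ((mul_left_eq_self₀.mp habs.symm).resolve_right habs0)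
    exact ⟨0, by simp [hzero]⟩
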